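/- Let s₇ be the real 4-dimensional Lie algebra with basis e₁, e₂, e₃, e₄ and nonzero brackets ⁅e₂, e₃⁆ = e₁, ⁅e₂, e₄⁆ = e₃, ⁅e₃, e₄⁆ = −e₂ (all other brackets of basis elements zero, extended bilinearly and antisymmetrically). A linear endomorphism D of s₇ is a derivation of s₇ if and only if there exist real numbers μ₁₁, μ₁₂, μ₁₃, μ₁₄, μ₂₃ such that D e₁ = μ₁₁ e₁, D e₂ = μ₁₂ e₁ + (μ₁₁/2) e₂ − μ₂₃ e₃, D e₃ = μ₁₃ e₁ + μ₂₃ e₂ + (μ₁₁/2) e₃, and D e₄ = μ₁₄ e₁ + μ₁₂ e₂ + μ₁₃ e₃. -/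

import Mathlib

attribute [local instance 100] LieRing.ofAssociativeRing

/-- Characterization of the derivations of the real 4-dimensional Lie algebra `s₇`
(Šnobl–Winternitz `s_{4,7}`), with basis `e₁ = b 0, …, e₄ = b 3` and nonzero brackets
`⁅e₂, e₃⁆ = e₁`, `⁅e₂, e₄⁆ = e₃`, `⁅e₃, e₄⁆ = -e₂`. -/
theorem stmt_14 {L : Type*} [LieRing L] [LieAlgebra ℝ L]
    (b : Module.Basis (Fin 4) ℝ L)
    (h12 : ⁅b 0, b 1⁆ = 0) (h13 : ⁅b 0, b 2⁆ = 0) (h14 : ⁅b 0, b 3⁆ = 0)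
    (h23 : ⁅b 1, b 2⁆ = b 0) (h24 : ⁅b 1, b 3⁆ = b 2) (h34 : ⁅b 2, b 3⁆ = -b 1)
    (D : L →ₗ[ℝ] L) :
    (∀ x y : L, D ⁅x, y⁆ = ⁅D x, y⁆ + ⁅x, D y⁆) ↔
      ∃ μ11 μ12 μ13 μ14 μ23 : ℝ,
        D (b 0) = μ11 • b 0 ∧
        D (b 1) = μ12 • b 0 + (μ11 / 2) • b 1 - μ23 • b 2 ∧
        D (b 2) = μ13 • b 0 + μ23 • b 1 + (μ11 / 2) • b 2 ∧
        D (b 3) = μ14 • b 0 + μ12 • b 1 + μ13 • b 2 := by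
  have h21 : ⁅b 1, b 0⁆ = 0 := by rw [← lie_skew, h12, neg_zero]
  have h31 : ⁅b 2, b 0⁆ = 0 := by rw [← lie_skew, h13, neg_zero]
  have h41 : ⁅b 3, b 0⁆ = 0 := by rw [← lie_skew, h14, neg_zero]
  have h32 : ⁅b 2, b 1⁆ = -b 0 := by rw [← lie_skew, h23]
  have h42 : ⁅b 3, b 1⁆ = -b 2 := by rw [← lie_skew, h24]
  have h43 : ⁅b 3, b 2⁆ = b 1 := by rw [← lie_skew, h34, neg_neg]
  constructor
  · intro hder
    obtain ⟨c, hD⟩ : ∃ c : Fin 4 → Fin 4 → ℝ, ∀ j,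
        D (b j) = c 0 j • b 0 + c 1 j • b 1 + c 2 j • b 2 + c 3 j • b 3 :=
      ⟨fun i j => b.repr (D (b j)) i, fun j => by
        have := (b.sum_repr (D (b j))).symm; rw [Fin.sum_univ_four] at this; exact this⟩
    -- derivation equations on basis pairs
    have E1 := hder (b 1) (b 2)
    have E2 := hder (b 1) (b 3)
    have E3 := hder (b 2) (b 3)
    have E4 := hder (b 0) (b 1)
    have E5 := hder (b 0) (b 2)
    rw [h23, hD 0, hD 1, hD 2] at E1
    rw [h24, hD 2, hD 1, hD 3] at E2
    rw [h34, hD 2, hD 3] at E3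
    rw [h12, hD 0, hD 1] at E4
    rw [h13, hD 0, hD 2] at E5
    rw [map_neg, hD 1] at E3
    rw [map_zero] at E4 E5
    simp only [add_lie, lie_add, smul_lie, lie_smul, lie_self, h12, h13, h14, h21, h23, h24,
      h31, h32, h34, h41, h42, h43, smul_zero, zero_add, add_zero, smul_neg] at E1 E2 E3 E4 E5
    have ext : ∀ (k : Fin 4) {u v : L}, u = v → b.repr u k = b.repr v k :=
      fun k u v h => by rw [h]
    have q1 := ext 0 E1; have q2 := ext 0 E2; have q3 := ext 1 E2
    have q4 := ext 2 E2; have q5 := ext 3 E2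
    have q6 := ext 0 E3; have q7 := ext 1 E3; have q8 := ext 2 E3; have q9 := ext 3 E3
    have q10 := ext 0 E4; have q11 := ext 2 E4
    have q12 := ext 0 E5; have q13 := ext 1 E5
    simp only [map_add, map_smul, map_neg, map_zero, Module.Basis.repr_self, Finsupp.add_apply,
      Finsupp.smul_apply, Finsupp.neg_apply, Finsupp.single_apply, Finsupp.coe_zero,
      Pi.zero_apply] at q1 q2 q3 q4 q5 q6 q7 q8 q9 q10 q11 q12 q13
    simp only [Fin.reduceEq, if_true, if_false, reduceIte, smul_eq_mul, mul_one, mul_zero, add_zero, zero_add, neg_zero, neg_neg, neg_add] at q1 q2 q3 q4 q5 q6 q7 q8 q9 q10 q11 q12 q13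
    refine ⟨c 0 0, c 0 1, c 0 2, c 0 3, c 1 2, ?_, ?_, ?_, ?_⟩
    · rw [hD 0]
      have e1 : c 1 0 = 0 := by linarith
      have e2 : c 2 0 = 0 := by linarith
      have e3 : c 3 0 = 0 := by linarith
      rw [e1, e2, e3]; module
    · rw [hD 1]
      have e1 : c 1 1 = c 0 0 / 2 := by linarith
      have e2 : c 2 1 = -c 1 2 := by linarith
      have e3 : c 3 1 = 0 := by linarith
      rw [e1, e2, e3]; module
    · rw [hD 2]
      have e1 : c 2 2 = c 0 0 / 2 := by linarith
      have e2 : c 1 2 = c 1 2 := rfl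
      have e3 : c 3 2 = 0 := by linarith
      rw [e1, e3]; module
    · rw [hD 3]
      have e1 : c 1 3 = c 0 1 := by linarith
      have e2 : c 2 3 = c 0 2 := by linarith
      have e3 : c 3 3 = 0 := by linarith
      rw [e1, e2, e3]; module
  · rintro ⟨μ11, μ12, μ13, μ14, μ23, hD0, hD1, hD2, hD3⟩
    have key : ∀ i j : Fin 4, D ⁅b i, b j⁆ = ⁅D (b i), b j⁆ + ⁅b i, D (b j)⁆ := by
      intro i j
      fin_cases i <;> fin_cases j <;>
        simp only [Fin.zero_eta, Fin.mk_one, Fin.reduceFinMk, Fin.isValue, h12, h13, h14, h21, h23, h24, h31, h32, h34, h41, h42, h43,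
          lie_self, map_zero, map_neg, hD0, hD1, hD2, hD3, lie_add, add_lie, lie_sub, sub_lie,
          lie_smul, smul_lie, lie_neg, neg_lie, smul_zero, smul_neg, zero_add, add_zero,
          neg_zero, neg_neg] <;>
        module
    intro x y
    have hbil : (LinearMap.llcomp ℝ L L L D) ∘ₗ (LieAlgebra.ad ℝ L).toLinearMap
        = ((LieAlgebra.ad ℝ L).toLinearMap ∘ₗ D)
          + ((LinearMap.llcomp ℝ L L L).flip D) ∘ₗ (LieAlgebra.ad ℝ L).toLinearMap := by
      apply b.ext; intro i; apply b.ext; intro j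
      simpa using key i j
    have := LinearMap.congr_fun (LinearMap.congr_fun hbil x) y
    simpa using this
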